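/- Let X be an irreducible affine variety over ℂ and A ⊆ ℂ[X] a subalgebra such that ℂ[X] is a finite A-module. Then any nonzero two-sided ideal of the ring of differential operators 𝒟(X) intersects A non-trivially. -/
import Mathlib

/-- Differential operators of order at most `n` on a commutative `ℂ`-algebra `B`,
defined inductively: order `0` operators are multiplications by elements of `B`,
and `u` has order `≤ n+1` if `[u, f]` has order `≤ n` for every multiplication
operator `f`. -/
def diffOpOfOrder (B : Type*) [CommRing B] [Algebra ℂ B] : ℕ → Set (Module.End ℂ B)
  | 0 => {u | ∃ b : B, u = LinearMap.mulLeft ℂ b}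
  | n + 1 => {u | ∀ b : B,
      u * LinearMap.mulLeft ℂ b - LinearMap.mulLeft ℂ b * u ∈ diffOpOfOrder B n}

/-- The set of all differential operators on `B`. -/
def diffOps (B : Type*) [CommRing B] [Algebra ℂ B] : Set (Module.End ℂ B) :=
  {u | ∃ n, u ∈ diffOpOfOrder B n}

/-- From a monic annihilating polynomial of a nonzero element `b` of a domain,
extract a nonzero "constant term" which is a multiple of `b`. -/
lemma aux_integral {R B : Type*} [CommRing R] [CommRing B] [IsDomain B] [Algebra R B]
    (hinj : Function.Injective (algebraMap R B)) (b : B) (hb : b ≠ 0) :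
    ∀ n (p : Polynomial R), p.natDegree = n → p.Monic → Polynomial.aeval b p = 0 →
    ∃ a : R, algebraMap R B a ≠ 0 ∧ ∃ c : B, algebraMap R B a = c * b := by
  intro n
  induction n using Nat.strong_induction_on with
  | _ n ih =>
    intro p hdeg hm h0
    have hdeg1 : 1 ≤ p.natDegree := by
      by_contra h
      have : p.natDegree = 0 := by omega
      have hp1 : p = 1 := hm.natDegree_eq_zero.mp this
      rw [hp1] at h0
      simp at h0
    have hkey : Polynomial.aeval b p.divX * b + algebraMap R B (p.coeff 0) = 0 := by
      have h2 := congrArg (Polynomial.aeval b) (Polynomial.divX_mul_X_add p)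
      simp only [map_add, map_mul, Polynomial.aeval_X, Polynomial.aeval_C] at h2
      exact h2.trans h0
    by_cases hc : p.coeff 0 = 0
    · -- recurse on divX p
      have hz : Polynomial.aeval b p.divX * b = 0 := by
        simpa [hc] using hkey
      have hdvx0 : Polynomial.aeval b p.divX = 0 := by
        rcases mul_eq_zero.mp hz with h | h
        · exact h
        · exact absurd h hb
      have hmonic : p.divX.Monic := by
        unfold Polynomial.Monic Polynomial.leadingCoeff
        rw [Polynomial.natDegree_divX_eq_natDegree_tsub_one, Polynomial.coeff_divX]
        have : p.natDegree - 1 + 1 = p.natDegree := by omega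
        rw [this]
        exact hm
      have hlt : p.divX.natDegree < n := by
        rw [Polynomial.natDegree_divX_eq_natDegree_tsub_one]
        omega
      exact ih _ hlt p.divX rfl hmonic hdvx0
    · refine ⟨p.coeff 0, ?_, -(Polynomial.aeval b p.divX), ?_⟩
      · intro h
        exact hc (hinj (by simpa using h))
      · linear_combination hkey

/-- Let `X` be an irreducible affine variety over `ℂ` (so `B = ℂ[X]` is a finitely
generated `ℂ`-algebra which is a domain) and `A ⊆ ℂ[X]` a subalgebra such that
`ℂ[X]` is a finite `A`-module.  Then any nonzero two-sided ideal `J` of the ring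
`𝒟(X)` of differential operators intersects `A` nontrivially. -/
theorem diffop_ideal_meets_subalgebra
    {B : Type*} [CommRing B] [IsDomain B] [Algebra ℂ B] [Algebra.FiniteType ℂ B]
    (A : Subalgebra ℂ B) (hfin : Module.Finite A B)
    (J : Set (Module.End ℂ B))
    (hJsub : J ⊆ diffOps B)
    (hJzero : (0 : Module.End ℂ B) ∈ J)
    (hJadd : ∀ u ∈ J, ∀ w ∈ J, u - w ∈ J)
    (hJl : ∀ d ∈ diffOps B, ∀ u ∈ J, d * u ∈ J)
    (hJr : ∀ d ∈ diffOps B, ∀ u ∈ J, u * d ∈ J)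
    (hJne : ∃ u ∈ J, u ≠ 0) :
    ∃ a : B, a ∈ A ∧ a ≠ 0 ∧ LinearMap.mulLeft ℂ a ∈ J := by
  -- Step 1: find a nonzero b with mulLeft b ∈ J.
  have hmul_diffOps : ∀ b : B, LinearMap.mulLeft ℂ b ∈ diffOps B := fun b => ⟨0, b, rfl⟩
  have hP : ∃ n, ∃ u ∈ J, u ≠ 0 ∧ u ∈ diffOpOfOrder B n := by
    obtain ⟨u, hu, hune⟩ := hJne
    obtain ⟨n, hn⟩ := hJsub hu
    exact ⟨n, u, hu, hune, hn⟩
  classical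
  obtain ⟨b, hbne, hbJ⟩ : ∃ b : B, b ≠ 0 ∧ LinearMap.mulLeft ℂ b ∈ J := by
    obtain ⟨u, huJ, hune, huord⟩ := Nat.find_spec hP
    cases hn2 : Nat.find hP with
    | zero =>
      rw [hn2] at huord
      simp only [diffOpOfOrder] at huord
      obtain ⟨b, rfl⟩ := huord
      refine ⟨b, ?_, huJ⟩
      intro h
      apply hune
      ext x
      simp [h]
    | succ m =>
      rw [hn2] at huord
      simp only [diffOpOfOrder] at huord
      have hcomm : ∀ c : B,
          u * LinearMap.mulLeft ℂ c - LinearMap.mulLeft ℂ c * u = 0 := by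
        intro c
        by_contra hne
        have hJcomm : u * LinearMap.mulLeft ℂ c - LinearMap.mulLeft ℂ c * u ∈ J :=
          hJadd _ (hJr _ (hmul_diffOps c) u huJ) _ (hJl _ (hmul_diffOps c) u huJ)
        have hmlt : m < Nat.find hP := by omega
        exact Nat.find_min hP hmlt ⟨_, hJcomm, hne, huord c⟩
      have hub : ∀ c : B, u c = c * u 1 := by
        intro c
        have := hcomm c
        rw [sub_eq_zero] at this
        have h2 := congrArg (fun (v : Module.End ℂ B) => v 1) this
        simpa using h2
      have hueq : u = LinearMap.mulLeft ℂ (u 1) := by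
        ext c
        simpa [mul_comm] using hub c
      refine ⟨u 1, ?_, hueq ▸ huJ⟩
      intro h
      apply hune
      ext c
      simpa [h] using hub c
  -- Step 2: integrality gives a nonzero element of A which is a multiple of b.
  have hint : IsIntegral A b := by
    have : Algebra.IsIntegral A B := Algebra.IsIntegral.of_finite A B
    exact Algebra.IsIntegral.isIntegral b
  obtain ⟨p, hpm, hp0⟩ := hint
  have hinj : Function.Injective (algebraMap A B) := Subtype.val_injective
  obtain ⟨a, hane, c, hac⟩ := aux_integral hinj b hbne p.natDegree p rfl hpm hp0
  refine ⟨algebraMap A B a, a.2, hane, ?_⟩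
  rw [hac, LinearMap.mulLeft_mul]
  exact hJl _ (hmul_diffOps c) _ hbJ
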